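/- Suppose Σ ∈ range Γ, i.e., Σ = (1/2π)∫ G(θ) dμ(θ) G(θ)* for a signed measure dμ, where G(θ) = (I − e^{−iθ}A)^{−1}b. Then there exists h ∈ ℂⁿ such that Σ − AΣA* = b h* + h b*. -/

import Mathlib

open Matrix MeasureTheory

noncomputable def Gv {n : ℕ} (A : Matrix (Fin n) (Fin n) ℂ) (b : Fin n → ℂ) (θ : ℝ) :
    Fin n → ℂ :=
  ((1 : Matrix (Fin n) (Fin n) ℂ) - Complex.exp (-(θ : ℂ) * Complex.I) • A)⁻¹ *ᵥ b

def SchurStable {n : ℕ} (A : Matrix (Fin n) (Fin n) ℂ) : Prop :=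
  ∀ z ∈ spectrum ℂ A, ‖z‖ < 1

/-- Membership in the range of Γ : signed measures → Hermitian matrices,
Γ(dμ) = (1/2π) ∫ G(θ) dμ(θ) G(θ)*, via Jordan decomposition dμ = dμ₊ − dμ₋. -/
def inRangeGamma {n : ℕ} (A : Matrix (Fin n) (Fin n) ℂ) (b : Fin n → ℂ)
    (S : Matrix (Fin n) (Fin n) ℂ) : Prop :=
  ∃ (μ ν : Measure ℝ), IsFiniteMeasure μ ∧ IsFiniteMeasure ν ∧
    ∀ i j, S i j = (1 / (2 * Real.pi) : ℝ) *
      ((∫ θ in Set.Ico (0 : ℝ) (2 * Real.pi), Gv A b θ i * star (Gv A b θ j) ∂μ)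
        - ∫ θ in Set.Ico (0 : ℝ) (2 * Real.pi), Gv A b θ i * star (Gv A b θ j) ∂ν)


lemma detUnit {n : ℕ} (A : Matrix (Fin n) (Fin n) ℂ) (hA : SchurStable A) (θ : ℝ) :
    IsUnit ((1 : Matrix (Fin n) (Fin n) ℂ) - Complex.exp (-(θ : ℂ) * Complex.I) • A).det := by
  set α := Complex.exp (-(θ : ℂ) * Complex.I) with hαdef
  have hα0 : α ≠ 0 := Complex.exp_ne_zero _
  have hnorm : ‖α‖ = 1 := by
    rw [hαdef]
    simp [Complex.norm_exp]
  have h1 : (1 : Matrix (Fin n) (Fin n) ℂ) - α • A = α • (α⁻¹ • (1 : Matrix (Fin n) (Fin n) ℂ) - A) := by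
    rw [smul_sub, smul_smul, mul_inv_cancel₀ hα0, one_smul]
  have h2 : (α⁻¹ • (1 : Matrix (Fin n) (Fin n) ℂ) - A).det ≠ 0 := by
    intro h0
    have hni : ¬ IsUnit (α⁻¹ • (1 : Matrix (Fin n) (Fin n) ℂ) - A) := by
      rw [Matrix.isUnit_iff_isUnit_det, h0]
      simp
    have hmem : α⁻¹ ∈ spectrum ℂ A := by
      rw [spectrum.mem_iff]
      simpa [Algebra.algebraMap_eq_smul_one] using hni
    have := hA _ hmem
    rw [norm_inv, hnorm] at this
    norm_num at this
  rw [h1, Matrix.det_smul, isUnit_iff_ne_zero]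
  exact mul_ne_zero (pow_ne_zero _ hα0) h2

lemma GvEq {n : ℕ} (A : Matrix (Fin n) (Fin n) ℂ) (b : Fin n → ℂ) (hA : SchurStable A) (θ : ℝ) :
    ((1 : Matrix (Fin n) (Fin n) ℂ) - Complex.exp (-(θ : ℂ) * Complex.I) • A) *ᵥ Gv A b θ = b := by
  rw [Gv, mulVec_mulVec, Matrix.mul_nonsing_inv _ (detUnit A hA θ), one_mulVec]

lemma contGv {n : ℕ} (A : Matrix (Fin n) (Fin n) ℂ) (b : Fin n → ℂ) (hA : SchurStable A)
    (i : Fin n) : Continuous fun θ : ℝ => Gv A b θ i := by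
  have hαc : Continuous fun θ : ℝ => Complex.exp (-(θ : ℂ) * Complex.I) :=
    Complex.continuous_exp.comp (by continuity)
  have hMc : Continuous fun θ : ℝ =>
      ((1 : Matrix (Fin n) (Fin n) ℂ) - Complex.exp (-(θ : ℂ) * Complex.I) • A) :=
    continuous_const.sub (hαc.smul continuous_const)
  have hdet : ∀ θ : ℝ,
      ((1 : Matrix (Fin n) (Fin n) ℂ) - Complex.exp (-(θ : ℂ) * Complex.I) • A).det ≠ 0 :=
    fun θ => by simpa [isUnit_iff_ne_zero] using detUnit A hA θ
  have heq : (fun θ : ℝ => Gv A b θ i) = fun θ : ℝ =>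
      (((1 : Matrix (Fin n) (Fin n) ℂ) - Complex.exp (-(θ : ℂ) * Complex.I) • A).det)⁻¹ *
        ((((1 : Matrix (Fin n) (Fin n) ℂ) - Complex.exp (-(θ : ℂ) * Complex.I) • A).adjugate) *ᵥ b) i := by
    funext θ
    rw [Gv, Matrix.inv_def, Ring.inverse_eq_inv, smul_mulVec]
    simp
  rw [heq]
  exact ((hMc.matrix_det).inv₀ hdet).mul
    ((continuous_apply i).comp (hMc.matrix_adjugate.matrix_mulVec continuous_const))

lemma GvRec {n : ℕ} (A : Matrix (Fin n) (Fin n) ℂ) (b : Fin n → ℂ) (hA : SchurStable A)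
    (θ : ℝ) (k : Fin n) :
    Gv A b θ k = b k + Complex.exp (-(θ : ℂ) * Complex.I) * (A *ᵥ Gv A b θ) k := by
  have h := GvEq A b hA θ
  rw [Matrix.sub_mulVec, Matrix.one_mulVec, Matrix.smul_mulVec] at h
  have h2 := congrFun h k
  simp only [Pi.sub_apply, Pi.smul_apply, smul_eq_mul] at h2
  linear_combination h2

lemma GvPoint {n : ℕ} (A : Matrix (Fin n) (Fin n) ℂ) (b : Fin n → ℂ) (hA : SchurStable A)
    (θ : ℝ) (i j : Fin n) :
    Gv A b θ i * star (Gv A b θ j)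
      - (A *ᵥ Gv A b θ) i * star ((A *ᵥ Gv A b θ) j)
    = b i * star (Gv A b θ j) + Gv A b θ i * star (b j) - b i * star (b j) := by
  have hαu : Complex.exp (-(θ : ℂ) * Complex.I)
      * star (Complex.exp (-(θ : ℂ) * Complex.I)) = 1 := by
    rw [Complex.star_def, ← Complex.exp_conj]
    rw [← Complex.exp_add]
    have : -(θ : ℂ) * Complex.I + starRingEnd ℂ (-(θ : ℂ) * Complex.I) = 0 := by
      simp [Complex.conj_ofReal, mul_comm]
    rw [this, Complex.exp_zero]
  rw [GvRec A b hA θ i, GvRec A b hA θ j]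
  simp only [star_add, star_mul']
  linear_combination ((A *ᵥ Gv A b θ) i * star ((A *ᵥ Gv A b θ) j)) * hαu

lemma keyInt {n : ℕ} (A : Matrix (Fin n) (Fin n) ℂ) (b : Fin n → ℂ) (hA : SchurStable A)
    (κ : Measure ℝ) [IsFiniteMeasure κ] (i j : Fin n) :
    (∫ θ in Set.Ico (0 : ℝ) (2 * Real.pi), Gv A b θ i * star (Gv A b θ j) ∂κ)
      - ∑ l, ∑ k, A i k *
          (∫ θ in Set.Ico (0 : ℝ) (2 * Real.pi), Gv A b θ k * star (Gv A b θ l) ∂κ)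
          * star (A j l)
    = b i * star (∫ θ in Set.Ico (0 : ℝ) (2 * Real.pi), Gv A b θ j ∂κ)
      + (∫ θ in Set.Ico (0 : ℝ) (2 * Real.pi), Gv A b θ i ∂κ) * star (b j)
      - b i * star (b j) * ((κ (Set.Ico (0 : ℝ) (2 * Real.pi))).toReal : ℂ) := by
  set E := Set.Ico (0 : ℝ) (2 * Real.pi) with hE
  have integ : ∀ f : ℝ → ℂ, Continuous f → IntegrableOn f E κ := fun f hf =>
    ((hf.continuousOn.integrableOn_compact isCompact_Icc).mono_set Set.Ico_subset_Icc_self)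
  have cg : ∀ k, Continuous fun θ : ℝ => Gv A b θ k := contGv A b hA
  have cAg : ∀ k, Continuous fun θ : ℝ => (A *ᵥ Gv A b θ) k := by
    intro k
    have : (fun θ : ℝ => (A *ᵥ Gv A b θ) k) = fun θ => ∑ l, A k l * Gv A b θ l := by
      funext θ; simp [Matrix.mulVec, dotProduct]
    rw [this]
    exact continuous_finset_sum _ fun l _ => continuous_const.mul (cg l)
  have cgg : ∀ k l, Continuous fun θ : ℝ => Gv A b θ k * star (Gv A b θ l) := fun k l =>
    (cg k).mul ((cg l).star)
  -- step 1
  have step1 : ∑ l, ∑ k, A i k *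
      (∫ θ in E, Gv A b θ k * star (Gv A b θ l) ∂κ) * star (A j l)
      = ∫ θ in E, (A *ᵥ Gv A b θ) i * star ((A *ᵥ Gv A b θ) j) ∂κ := by
    have h1 : ∀ l k, A i k * (∫ θ in E, Gv A b θ k * star (Gv A b θ l) ∂κ) * star (A j l)
        = ∫ θ in E, (A i k * star (A j l)) * (Gv A b θ k * star (Gv A b θ l)) ∂κ := by
      intro l k
      rw [integral_const_mul]
      ring
    have h2 : ∀ l : Fin n, (∑ k, ∫ θ in E,
        (A i k * star (A j l)) * (Gv A b θ k * star (Gv A b θ l)) ∂κ)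
        = ∫ θ in E, ∑ k, (A i k * star (A j l)) * (Gv A b θ k * star (Gv A b θ l)) ∂κ :=
      fun l => (integral_finset_sum _ fun k _ =>
        (integ _ (continuous_const.mul (cgg k l)))).symm
    simp only [h1, h2]
    rw [← integral_finset_sum _ (fun l _ => integ
      (fun θ => ∑ k, A i k * star (A j l) * (Gv A b θ k * star (Gv A b θ l)))
      (continuous_finset_sum _ fun k _ => continuous_const.mul (cgg k l)))]
    apply integral_congr_ae
    filter_upwards with θ
    rw [Finset.sum_comm]
    simp only [Matrix.mulVec, dotProduct, star_sum, star_mul', Finset.sum_mul_sum]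
    apply Finset.sum_congr rfl
    intro k _
    apply Finset.sum_congr rfl
    intro l _
    ring
  -- step 2
  have int_gg : IntegrableOn (fun θ => Gv A b θ i * star (Gv A b θ j)) E κ := integ _ (cgg i j)
  have int_Agg : IntegrableOn (fun θ => (A *ᵥ Gv A b θ) i * star ((A *ᵥ Gv A b θ) j)) E κ :=
    integ _ ((cAg i).mul ((cAg j).star))
  have int_bg : IntegrableOn (fun θ => b i * star (Gv A b θ j)) E κ :=
    integ _ (continuous_const.mul (cg j).star)
  have int_gb : IntegrableOn (fun θ => Gv A b θ i * star (b j)) E κ :=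
    integ _ ((cg i).mul continuous_const)
  rw [step1, ← integral_sub int_gg int_Agg]
  have hpt : (fun θ => Gv A b θ i * star (Gv A b θ j)
      - (A *ᵥ Gv A b θ) i * star ((A *ᵥ Gv A b θ) j))
      = fun θ => b i * star (Gv A b θ j) + Gv A b θ i * star (b j) - b i * star (b j) := by
    funext θ; exact GvPoint A b hA θ i j
  have int_sum : IntegrableOn
      (fun θ => b i * star (Gv A b θ j) + Gv A b θ i * star (b j)) E κ :=
    integ _ ((continuous_const.mul (cg j).star).add ((cg i).mul continuous_const))
  have int_const : IntegrableOn (fun _ : ℝ => b i * star (b j)) E κ := integ _ continuous_const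
  rw [hpt, integral_sub int_sum int_const,
    integral_add int_bg int_gb, integral_const_mul, integral_mul_const, integral_const]
  · have hconj : ∫ θ in E, star (Gv A b θ j) ∂κ = star (∫ θ in E, Gv A b θ j ∂κ) := by
      simpa [Complex.star_def] using
        (integral_conj (μ := κ.restrict E) (f := fun θ => Gv A b θ j))
    rw [hconj, measureReal_restrict_apply_univ, measureReal_def]

    ring_nf
    simp [Complex.real_smul]
    ring

theorem stmt11 {n : ℕ} (A : Matrix (Fin n) (Fin n) ℂ) (b : Fin n → ℂ)
    (hA : SchurStable A) (S : Matrix (Fin n) (Fin n) ℂ)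
    (hS : inRangeGamma A b S) :
    ∃ h : Fin n → ℂ,
      S - A * S * Aᴴ = vecMulVec b (star h) + vecMulVec h (star b) := by
  obtain ⟨μ, ν, hμ, hν, hSe⟩ := hS
  set E := Set.Ico (0 : ℝ) (2 * Real.pi) with hEdef
  refine ⟨fun i => ((1 / (2 * Real.pi) : ℝ) : ℂ) *
        ((∫ θ in E, Gv A b θ i ∂μ) - ∫ θ in E, Gv A b θ i ∂ν)
      - ((1 / (2 * Real.pi) : ℝ) : ℂ) * (((μ E).toReal : ℂ) - ((ν E).toReal : ℂ)) / 2 * b i,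
    ?_⟩
  ext i j
  have hASA : (A * S * Aᴴ) i j = ∑ l, ∑ k, A i k * S k l * star (A j l) := by
    simp only [Matrix.mul_apply, Matrix.conjTranspose_apply, Finset.sum_mul]
  have hsum : ∑ l, ∑ k, A i k * S k l * star (A j l)
      = ((1 / (2 * Real.pi) : ℝ) : ℂ) *
          (∑ l, ∑ k, A i k * (∫ θ in E, Gv A b θ k * star (Gv A b θ l) ∂μ) * star (A j l))
        - ((1 / (2 * Real.pi) : ℝ) : ℂ) *
          (∑ l, ∑ k, A i k * (∫ θ in E, Gv A b θ k * star (Gv A b θ l) ∂ν) * star (A j l)) := by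
    simp only [Finset.mul_sum, ← Finset.sum_sub_distrib]
    refine Finset.sum_congr rfl fun l _ => Finset.sum_congr rfl fun k _ => ?_
    rw [hSe k l]
    ring
  have kμ := keyInt A b hA μ i j
  have kν := keyInt A b hA ν i j
  simp only [Matrix.sub_apply, Matrix.add_apply, Matrix.vecMulVec_apply, Pi.star_apply]
  rw [hASA, hsum, hSe i j]
  simp only [← hEdef] at kμ kν ⊢
  simp only [Complex.star_def, _root_.map_sub, _root_.map_mul, map_div₀, map_ofNat,
    Complex.conj_ofReal] at kμ kν ⊢
  linear_combination ((1 / (2 * Real.pi) : ℝ) : ℂ) * kμ - ((1 / (2 * Real.pi) : ℝ) : ℂ) * kν
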